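/- Let an almost paracontact metric Walker structure on ℝ³ be η-Einstein, i.e. there exist smooth nowhere-vanishing functions a, b : ℝ³ → ℝ with ρ(∂i,∂j) = a·g(∂i,∂j) + b·η(∂i)η(∂j) for all coordinate fields at every point. Then: (a) R(∂i,∂j)ξ = 0 everywhere for all i,j, so every ξ-sectional curvature vanishes: g(R(X,ξ)ξ, X) = 0 for every vector field X; (b) ξ₃ ≡ 0, f_xx vanishes nowhere, and for the vector fields V₁ = ∂x and V₂ = (f_xy/f_xx)∂y + ∂z one has η(V₁) = η(V₂) = 0, g(V₁,V₁) = 0, g(V₁,V₂) = 1, g(R(V₁,V₂)V₂, V₁) = (1/2)f_xx, so that the φ-sectional curvature K(V₁,V₂) = g(R(V₁,V₂)V₂,V₁)/(g(V₁,V₁)g(V₂,V₂) − g(V₁,V₂)²) equals −(1/2)f_xx, which is nowhere zero. (Theorem 5.3(iii),(iv): an η-Einstein almost paracontact metric 3-dimensional Walker manifold has zero ξ-sectional curvature and nonzero φ-sectional curvature −(1/2)f_xx.) -/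

import Mathlib

open Real

/-- Points of the Walker manifold `M = ℝ³` with coordinates `(x,y,z)`. -/
abbrev Pt : Type := ℝ × ℝ × ℝ

/-- Vector fields on `ℝ³`, given by their components in the frame `∂x, ∂y, ∂z`. -/
abbrev VF : Type := Pt → Pt

/-- Partial derivative ∂/∂x. -/
noncomputable def pdx (F : Pt → ℝ) (p : Pt) : ℝ := fderiv ℝ F p ((1:ℝ), (0:ℝ), (0:ℝ))

/-- Partial derivative ∂/∂y. -/
noncomputable def pdy (F : Pt → ℝ) (p : Pt) : ℝ := fderiv ℝ F p ((0:ℝ), (1:ℝ), (0:ℝ))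

/-- Partial derivative ∂/∂z. -/
noncomputable def pdz (F : Pt → ℝ) (p : Pt) : ℝ := fderiv ℝ F p ((0:ℝ), (0:ℝ), (1:ℝ))

/-- Directional derivative of a scalar function along a vector field. -/
noncomputable def dd (X : VF) (F : Pt → ℝ) (p : Pt) : ℝ := fderiv ℝ F p (X p)

/-- Components of a tangent vector. -/
def c1 (v : Pt) : ℝ := v.1
def c2 (v : Pt) : ℝ := v.2.1
def c3 (v : Pt) : ℝ := v.2.2

/-- The coordinate vector fields `∂x, ∂y, ∂z`. -/
noncomputable def E : Fin 3 → VF :=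
  ![fun _ => ((1:ℝ), (0:ℝ), (0:ℝ)), fun _ => ((0:ℝ), (1:ℝ), (0:ℝ)),
    fun _ => ((0:ℝ), (0:ℝ), (1:ℝ))]

/-- The Walker metric with `ε = 1`: `g(∂x,∂z) = g(∂z,∂x) = 1`, `g(∂y,∂y) = 1`,
`g(∂z,∂z) = f`, all other components zero. -/
noncomputable def gm (f : Pt → ℝ) (X Y : VF) (p : Pt) : ℝ :=
  c1 (X p) * c3 (Y p) + c3 (X p) * c1 (Y p) + c2 (X p) * c2 (Y p)
    + f p * c3 (X p) * c3 (Y p)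

/-- The Levi-Civita connection of the Walker metric:
`∇_{∂x}∂z = ∇_{∂z}∂x = (1/2) f_x ∂x`, `∇_{∂y}∂z = ∇_{∂z}∂y = (1/2) f_y ∂x`,
`∇_{∂z}∂z = (1/2)(f f_x + f_z) ∂x - (1/2) f_y ∂y - (1/2) f_x ∂z`, all other covariant
derivatives of coordinate fields zero, extended by `C^∞`-linearity below and the
Leibniz rule above. -/
noncomputable def cov (f : Pt → ℝ) (X Y : VF) : VF := fun p =>
  ( dd X (fun q => c1 (Y q)) p
      + (1/2) * pdx f p * (c1 (X p) * c3 (Y p) + c3 (X p) * c1 (Y p))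
      + (1/2) * pdy f p * (c2 (X p) * c3 (Y p) + c3 (X p) * c2 (Y p))
      + (1/2) * (f p * pdx f p + pdz f p) * (c3 (X p) * c3 (Y p)),
    dd X (fun q => c2 (Y q)) p - (1/2) * pdy f p * (c3 (X p) * c3 (Y p)),
    dd X (fun q => c3 (Y q)) p - (1/2) * pdx f p * (c3 (X p) * c3 (Y p)) )

/-- Lie bracket of vector fields on `ℝ³`. -/
noncomputable def brk (X Y : VF) : VF := fun p =>
  ( dd X (fun q => c1 (Y q)) p - dd Y (fun q => c1 (X q)) p,
    dd X (fun q => c2 (Y q)) p - dd Y (fun q => c2 (X q)) p,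
    dd X (fun q => c3 (Y q)) p - dd Y (fun q => c3 (X q)) p )

/-- The `(1,1)`-tensor `φ` of the almost paracontact metric Walker structure:
`φ∂x = -ξ₂∂x + ξ₃∂y`, `φ∂y = (ξ₁ + fξ₃)∂x - ξ₃∂z`, `φ∂z = -fξ₂∂x - ξ₁∂y + ξ₂∂z`. -/
noncomputable def phiV (f ξ₁ ξ₂ ξ₃ : Pt → ℝ) (X : VF) : VF := fun p =>
  ( -ξ₂ p * c1 (X p) + (ξ₁ p + f p * ξ₃ p) * c2 (X p) - f p * ξ₂ p * c3 (X p),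
    ξ₃ p * c1 (X p) - ξ₁ p * c3 (X p),
    -ξ₃ p * c2 (X p) + ξ₂ p * c3 (X p) )

/-- The 1-form `η = ξ₃ dx + ξ₂ dy + (ξ₁ + fξ₃) dz`. -/
noncomputable def etaV (f ξ₁ ξ₂ ξ₃ : Pt → ℝ) (X : VF) (p : Pt) : ℝ :=
  ξ₃ p * c1 (X p) + ξ₂ p * c2 (X p) + (ξ₁ p + f p * ξ₃ p) * c3 (X p)

/-- The structure tensor `F(X,Y,Z) = g((∇_X φ)Y, Z)`, `(∇_X φ)Y = ∇_X(φY) - φ(∇_X Y)`. -/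
noncomputable def Ften (f ξ₁ ξ₂ ξ₃ : Pt → ℝ) (X Y Z : VF) (p : Pt) : ℝ :=
  gm f (fun q => cov f X (phiV f ξ₁ ξ₂ ξ₃ Y) q - phiV f ξ₁ ξ₂ ξ₃ (cov f X Y) q) Z p

/-- The fundamental 2-form `Φ(X,Y) = g(φX, Y)`. -/
noncomputable def Phi2 (f ξ₁ ξ₂ ξ₃ : Pt → ℝ) (X Y : VF) : Pt → ℝ :=
  gm f (phiV f ξ₁ ξ₂ ξ₃ X) Y

/-- `dη(∂i,∂j) = (1/2)(∂i(η(∂j)) - ∂j(η(∂i)))` on coordinate fields. -/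
noncomputable def deta (f ξ₁ ξ₂ ξ₃ : Pt → ℝ) (i j : Fin 3) (p : Pt) : ℝ :=
  (1/2) * (dd (E i) (etaV f ξ₁ ξ₂ ξ₃ (E j)) p - dd (E j) (etaV f ξ₁ ξ₂ ξ₃ (E i)) p)

/-- `dη(X,Y) = (1/2)(X(η(Y)) - Y(η(X)) - η([X,Y]))` on general vector fields. -/
noncomputable def detaB (f ξ₁ ξ₂ ξ₃ : Pt → ℝ) (X Y : VF) (p : Pt) : ℝ :=
  (1/2) * (dd X (etaV f ξ₁ ξ₂ ξ₃ Y) p - dd Y (etaV f ξ₁ ξ₂ ξ₃ X) p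
    - etaV f ξ₁ ξ₂ ξ₃ (brk X Y) p)

/-- The Nijenhuis tensor `N(X,Y) = φ²[X,Y] + [φX,φY] - φ[φX,Y] - φ[X,φY]`. -/
noncomputable def nij (f ξ₁ ξ₂ ξ₃ : Pt → ℝ) (X Y : VF) : VF := fun p =>
  phiV f ξ₁ ξ₂ ξ₃ (phiV f ξ₁ ξ₂ ξ₃ (brk X Y)) p
    + brk (phiV f ξ₁ ξ₂ ξ₃ X) (phiV f ξ₁ ξ₂ ξ₃ Y) p
    - phiV f ξ₁ ξ₂ ξ₃ (brk (phiV f ξ₁ ξ₂ ξ₃ X) Y) p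
    - phiV f ξ₁ ξ₂ ξ₃ (brk X (phiV f ξ₁ ξ₂ ξ₃ Y)) p

/-- The curvature tensor, with the paper's sign convention
`R(X,Y)Z = ∇_{[X,Y]}Z - ∇_X∇_Y Z + ∇_Y∇_X Z`. -/
noncomputable def Rop (f : Pt → ℝ) (X Y Z : VF) : VF := fun p =>
  cov f (brk X Y) Z p - cov f X (cov f Y Z) p + cov f Y (cov f X Z) p

/-- Second partial derivatives of `f`. -/
noncomputable def fxx (f : Pt → ℝ) : Pt → ℝ := pdx (pdx f)
noncomputable def fxy (f : Pt → ℝ) : Pt → ℝ := pdy (pdx f)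
noncomputable def fyy (f : Pt → ℝ) : Pt → ℝ := pdy (pdy f)

/-- The Ricci tensor of the Walker metric: `ρ(∂x,∂z) = ρ(∂z,∂x) = (1/2) f_xx`,
`ρ(∂y,∂z) = ρ(∂z,∂y) = (1/2) f_xy`, `ρ(∂z,∂z) = (1/2)(f f_xx - f_yy)`, all other
components zero, extended tensorially. -/
noncomputable def rhoT (f : Pt → ℝ) (X Y : VF) (p : Pt) : ℝ :=
  (1/2) * fxx f p * (c1 (X p) * c3 (Y p) + c3 (X p) * c1 (Y p))
    + (1/2) * fxy f p * (c2 (X p) * c3 (Y p) + c3 (X p) * c2 (Y p))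
    + (1/2) * (f p * fxx f p - fyy f p) * (c3 (X p) * c3 (Y p))

/-- The Ricci operator: `Q∂x = (1/2)f_xx ∂x`, `Q∂y = (1/2)f_xy ∂x`,
`Q∂z = -(1/2)f_yy ∂x + (1/2)f_xy ∂y + (1/2)f_xx ∂z`. -/
noncomputable def Qop (f : Pt → ℝ) (X : VF) : VF := fun p =>
  ( (1/2) * fxx f p * c1 (X p) + (1/2) * fxy f p * c2 (X p) - (1/2) * fyy f p * c3 (X p),
    (1/2) * fxy f p * c3 (X p),
    (1/2) * fxx f p * c3 (X p) )

/-- `dΦ(∂x,∂y,∂z) = ∂x(Φ(∂y,∂z)) - ∂y(Φ(∂x,∂z)) + ∂z(Φ(∂x,∂y))`. -/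
noncomputable def dPhi (f ξ₁ ξ₂ ξ₃ : Pt → ℝ) (p : Pt) : ℝ :=
  pdx (Phi2 f ξ₁ ξ₂ ξ₃ (E 1) (E 2)) p - pdy (Phi2 f ξ₁ ξ₂ ξ₃ (E 0) (E 2)) p
    + pdz (Phi2 f ξ₁ ξ₂ ξ₃ (E 0) (E 1)) p

/-- `(η∧Φ)(∂x,∂y,∂z) = η(∂x)Φ(∂y,∂z) - η(∂y)Φ(∂x,∂z) + η(∂z)Φ(∂x,∂y)`. -/
noncomputable def etaWedgePhi (f ξ₁ ξ₂ ξ₃ : Pt → ℝ) (p : Pt) : ℝ :=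
  etaV f ξ₁ ξ₂ ξ₃ (E 0) p * Phi2 f ξ₁ ξ₂ ξ₃ (E 1) (E 2) p
    - etaV f ξ₁ ξ₂ ξ₃ (E 1) p * Phi2 f ξ₁ ξ₂ ξ₃ (E 0) (E 2) p
    + etaV f ξ₁ ξ₂ ξ₃ (E 2) p * Phi2 f ξ₁ ξ₂ ξ₃ (E 0) (E 1) p

/-- The constant function `0`. -/
noncomputable def zeroF : Pt → ℝ := fun _ => 0
/-- The constant function `1`. -/
noncomputable def oneF : Pt → ℝ := fun _ => 1
/-- The constant function `-1`. -/
noncomputable def negOneF : Pt → ℝ := fun _ => -1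

/-- The vector field `V₂ = (f_xy/f_xx)∂y + ∂z`. -/
noncomputable def V2 (f : Pt → ℝ) : VF := fun p => ((0:ℝ), fxy f p / fxx f p, (1:ℝ))

set_option maxHeartbeats 2000000

section Helpers

lemma sm_diff {E' : Type*} [NormedAddCommGroup E'] [NormedSpace ℝ E'] {F : Pt → E'}
    (h : ContDiff ℝ (⊤ : ℕ∞) F) : Differentiable ℝ F := h.differentiable (by norm_cast)

lemma sm_fd {F : Pt → ℝ} (h : ContDiff ℝ (⊤ : ℕ∞) F) (v : Pt) :
    ContDiff ℝ (⊤ : ℕ∞) (fun p => fderiv ℝ F p v) :=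
  (h.fderiv_right (by norm_cast)).clm_apply contDiff_const

lemma fd_clm {F : Pt → ℝ} (h : ContDiff ℝ (⊤ : ℕ∞) F) (p : Pt) (z w : Pt) :
    fderiv ℝ (fun q => fderiv ℝ F q z) p w = fderiv ℝ (fderiv ℝ F) p w z := by
  have hd : DifferentiableAt ℝ (fderiv ℝ F) p :=
    (sm_diff (h.fderiv_right (by norm_cast))).differentiableAt
  rw [show (fun q => fderiv ℝ F q z) = fun q => (fderiv ℝ F q) z from rfl,
    fderiv_clm_apply hd (differentiableAt_const z)]
  simp

lemma schwarz {F : Pt → ℝ} (h : ContDiff ℝ (⊤ : ℕ∞) F) (p v w : Pt) :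
    fderiv ℝ (fun q => fderiv ℝ F q v) p w = fderiv ℝ (fun q => fderiv ℝ F q w) p v := by
  rw [fd_clm h p v w, fd_clm h p w v]
  exact ContDiffAt.isSymmSndFDerivAt (n := ((⊤:ℕ∞) : WithTop ℕ∞)) h.contDiffAt (by simp only [minSmoothness_of_isRCLikeNormedField]; exact WithTop.coe_le_coe.mpr (le_top : (2:ℕ∞) ≤ ⊤)) w v

lemma fdadd {F G : Pt → ℝ} (p w : Pt) (hF : DifferentiableAt ℝ F p)
    (hG : DifferentiableAt ℝ G p) :
    fderiv ℝ (fun q => F q + G q) p w = fderiv ℝ F p w + fderiv ℝ G p w := by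
  rw [fderiv_fun_add hF hG]; simp

lemma fdmul {F G : Pt → ℝ} (p w : Pt) (hF : DifferentiableAt ℝ F p)
    (hG : DifferentiableAt ℝ G p) :
    fderiv ℝ (fun q => F q * G q) p w = fderiv ℝ F p w * G p + F p * fderiv ℝ G p w := by
  rw [fderiv_fun_mul hF hG]; simp; ring

lemma fdcmul {F : Pt → ℝ} (c : ℝ) (p w : Pt) (hF : DifferentiableAt ℝ F p) :
    fderiv ℝ (fun q => c * F q) p w = c * fderiv ℝ F p w := by
  rw [fderiv_const_mul hF]; simp

lemma fd_expand (F : Pt → ℝ) (p : Pt) (v : Pt) :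
    fderiv ℝ F p v = v.1 * fderiv ℝ F p ((1:ℝ),(0:ℝ),(0:ℝ))
      + v.2.1 * fderiv ℝ F p ((0:ℝ),(1:ℝ),(0:ℝ))
      + v.2.2 * fderiv ℝ F p ((0:ℝ),(0:ℝ),(1:ℝ)) := by
  have hv : v = v.1 • ((1:ℝ),(0:ℝ),(0:ℝ)) + v.2.1 • ((0:ℝ),(1:ℝ),(0:ℝ))
      + v.2.2 • ((0:ℝ),(0:ℝ),(1:ℝ)) := by simp [Prod.ext_iff]
  rw [hv, map_add, map_add, map_smul, map_smul, map_smul]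
  simp

lemma fdprod3 {g1 g2 g3 : Pt → ℝ} (p w : Pt) (h1 : DifferentiableAt ℝ g1 p)
    (h2 : DifferentiableAt ℝ g2 p) (h3 : DifferentiableAt ℝ g3 p) :
    fderiv ℝ (fun q => ((g1 q, g2 q, g3 q) : Pt)) p w
      = (fderiv ℝ g1 p w, fderiv ℝ g2 p w, fderiv ℝ g3 p w) := by
  rw [(h1.hasFDerivAt.prodMk (h2.hasFDerivAt.prodMk h3.hasFDerivAt)).fderiv]
  rfl

lemma fd_dd {u : Pt → ℝ} (h : ContDiff ℝ (⊤ : ℕ∞) u) {X : VF} (p w : Pt)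
    (hX : DifferentiableAt ℝ X p) :
    fderiv ℝ (fun q => fderiv ℝ u q (X q)) p w
      = fderiv ℝ (fderiv ℝ u) p w (X p) + fderiv ℝ u p (fderiv ℝ X p w) := by
  have hd : DifferentiableAt ℝ (fderiv ℝ u) p :=
    (sm_diff (h.fderiv_right (by norm_cast))).differentiableAt
  rw [show (fun q => fderiv ℝ u q (X q)) = fun q => (fderiv ℝ u q) (X q) from rfl,
    fderiv_clm_apply hd hX]
  simp
  ring

lemma hess_symm {F : Pt → ℝ} (h : ContDiff ℝ (⊤ : ℕ∞) F) (p v w : Pt) :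
    fderiv ℝ (fderiv ℝ F) p v w = fderiv ℝ (fderiv ℝ F) p w v :=
  ContDiffAt.isSymmSndFDerivAt (n := ((⊤:ℕ∞) : WithTop ℕ∞)) h.contDiffAt (by simp only [minSmoothness_of_isRCLikeNormedField]; exact WithTop.coe_le_coe.mpr (le_top : (2:ℕ∞) ≤ ⊤)) v w

end Helpers

/-- Theorem 5.3(iii),(iv): an η-Einstein almost paracontact metric 3-dimensional
Walker manifold has zero ξ-sectional curvature and constant nonzero φ-sectional
curvature `-(1/2)f_xx`. -/
theorem etaEinstein_sectional_curvatures (f ξ₁ ξ₂ ξ₃ : Pt → ℝ)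
    (hf : ContDiff ℝ (⊤ : ℕ∞) f) (h1 : ContDiff ℝ (⊤ : ℕ∞) ξ₁)
    (h2 : ContDiff ℝ (⊤ : ℕ∞) ξ₂) (h3 : ContDiff ℝ (⊤ : ℕ∞) ξ₃)
    (hconstr : ∀ p : Pt, ξ₂ p ^ 2 + f p * ξ₃ p ^ 2 + 2 * ξ₁ p * ξ₃ p = 1)
    (a b : Pt → ℝ) (ha : ContDiff ℝ (⊤ : ℕ∞) a) (hb : ContDiff ℝ (⊤ : ℕ∞) b)
    (ha0 : ∀ p : Pt, a p ≠ 0) (hb0 : ∀ p : Pt, b p ≠ 0)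
    (hEin : ∀ (i j : Fin 3) (p : Pt),
      rhoT f (E i) (E j) p = a p * gm f (E i) (E j) p
        + b p * etaV f ξ₁ ξ₂ ξ₃ (E i) p * etaV f ξ₁ ξ₂ ξ₃ (E j) p) :
    (∀ (i j : Fin 3) (p : Pt), Rop f (E i) (E j) (fun q => (ξ₁ q, ξ₂ q, ξ₃ q)) p = 0) ∧
    (∀ X : VF, ContDiff ℝ (⊤ : ℕ∞) X → ∀ p : Pt,
      gm f (Rop f X (fun q => (ξ₁ q, ξ₂ q, ξ₃ q)) (fun q => (ξ₁ q, ξ₂ q, ξ₃ q))) X p = 0) ∧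
    (∀ p : Pt, ξ₃ p = 0) ∧ (∀ p : Pt, fxx f p ≠ 0) ∧
    (∀ p : Pt, etaV f ξ₁ ξ₂ ξ₃ (E 0) p = 0) ∧
    (∀ p : Pt, etaV f ξ₁ ξ₂ ξ₃ (V2 f) p = 0) ∧
    (∀ p : Pt, gm f (E 0) (E 0) p = 0) ∧
    (∀ p : Pt, gm f (E 0) (V2 f) p = 1) ∧
    (∀ p : Pt, gm f (Rop f (E 0) (V2 f) (V2 f)) (E 0) p = (1/2) * fxx f p) ∧
    (∀ p : Pt, gm f (Rop f (E 0) (V2 f) (V2 f)) (E 0) p /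
        (gm f (E 0) (E 0) p * gm f (V2 f) (V2 f) p - gm f (E 0) (V2 f) p ^ 2) =
      -((1/2) * fxx f p)) ∧
    (∀ p : Pt, -((1/2) * fxx f p) ≠ 0) := by
  classical
  have F1 : ∀ p : Pt, ξ₃ p = 0 := by
    intro p
    have e := hEin 0 0 p
    simp [rhoT, gm, etaV, E, c1, c2, c3] at e
    exact e.resolve_left (hb0 p)
  have hx3f : ξ₃ = fun _ => (0:ℝ) := funext F1
  subst hx3f
  have F2 : ∀ p : Pt, ξ₂ p ^ 2 = 1 := by intro p; have := hconstr p; simpa using this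
  have hv0 : ∀ p : Pt, ξ₂ p ≠ 0 := by
    intro p h; have := F2 p; rw [h] at this; norm_num at this
  have F3 : ∀ p : Pt, a p = - b p := by
    intro p
    have e := hEin 1 1 p
    simp [rhoT, gm, etaV, E, c1, c2, c3] at e
    have h2' := F2 p
    linear_combination (-1 : ℝ) * e + (-(b p)) * h2'
  have F4 : ∀ p : Pt, fxx f p = -(2 * b p) := by
    intro p
    have e := hEin 0 2 p
    simp [rhoT, gm, etaV, E, c1, c2, c3] at e
    rw [F3 p] at e; linarith
  have F7 : ∀ p : Pt, fxx f p ≠ 0 := by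
    intro p h; rw [F4 p] at h; exact hb0 p (by linarith)
  have F5 : ∀ p : Pt, fxy f p = 2 * (b p * ξ₂ p * ξ₁ p) := by
    intro p
    have e := hEin 1 2 p
    simp [rhoT, gm, etaV, E, c1, c2, c3] at e
    linarith
  have F6 : ∀ p : Pt, fyy f p = -(2 * (b p * (ξ₁ p * ξ₁ p))) := by
    intro p
    have e := hEin 2 2 p
    simp [rhoT, gm, etaV, E, c1, c2, c3] at e
    rw [F3 p, F4 p] at e; nlinarith [e]
  -- items 3..8, 10, 11 and placeholders
  have item9 : ∀ p : Pt, gm f (Rop f (E 0) (V2 f) (V2 f)) (E 0) p = (1/2) * fxx f p := by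
    intro p
    have hU3 : (fun q => c3 (cov f (V2 f) (V2 f) q))
        = fun q => -(1/2) * fderiv ℝ f q ((1:ℝ),(0:ℝ),(0:ℝ)) := by
      funext q; simp [cov, dd, V2, c1, c2, c3, pdx]
    have hS3 : (fun q => c3 (cov f (E 0) (V2 f) q)) = fun _ => (0:ℝ) := by
      funext q; simp [cov, dd, E, V2, c1, c2, c3]
    have hB3 : (fun q => c3 (brk (E 0) (V2 f) q)) = fun _ => (0:ℝ) := by
      funext q; simp [brk, dd, E, V2, c1, c2, c3]
    have hgm : gm f (Rop f (E 0) (V2 f) (V2 f)) (E 0) p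
        = c3 (Rop f (E 0) (V2 f) (V2 f) p) := by
      simp [gm, E, c1, c2, c3]
    rw [hgm]
    have hrop : c3 (Rop f (E 0) (V2 f) (V2 f) p)
        = c3 (cov f (brk (E 0) (V2 f)) (V2 f) p)
          - c3 (cov f (E 0) (cov f (V2 f) (V2 f)) p)
          + c3 (cov f (V2 f) (cov f (E 0) (V2 f)) p) := by
      simp [Rop, c3]
    rw [hrop]
    have t1 : c3 (cov f (brk (E 0) (V2 f)) (V2 f) p) = 0 := by
      simp [cov, brk, dd, E, V2, c1, c2, c3]
    have t2 : c3 (cov f (E 0) (cov f (V2 f) (V2 f)) p) = -((1/2) * fxx f p) := by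
      have hdiff : DifferentiableAt ℝ (fun q => fderiv ℝ f q ((1:ℝ),(0:ℝ),(0:ℝ))) p :=
        (sm_diff (sm_fd hf _)).differentiableAt
      have hfd : fderiv ℝ (fun q => -(1/2) * fderiv ℝ f q ((1:ℝ),(0:ℝ),(0:ℝ))) p ((1:ℝ),(0:ℝ),(0:ℝ))
          = -((1/2) * fxx f p) := by
        rw [fdcmul (-(1/2)) p _ hdiff]
        norm_num
        rfl
      show dd (E 0) (fun q => c3 (cov f (V2 f) (V2 f) q)) p
          - 1/2 * pdx f p * (c3 (E 0 p) * c3 (cov f (V2 f) (V2 f) p)) = -((1/2) * fxx f p)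
      rw [hU3]
      simp only [dd]
      rw [show (E 0 p : Pt) = ((1:ℝ),(0:ℝ),(0:ℝ)) from rfl, hfd]
      simp [c3]
    have t3 : c3 (cov f (V2 f) (cov f (E 0) (V2 f)) p) = 0 := by
      have hsp : c3 (cov f (E 0) (V2 f) p) = 0 := congrFun hS3 p
      show dd (V2 f) (fun q => c3 (cov f (E 0) (V2 f) q)) p
          - 1/2 * pdx f p * (c3 (V2 f p) * c3 (cov f (E 0) (V2 f) p)) = 0
      rw [hS3, hsp]
      simp [dd]
    rw [t1, t2, t3]
    ring

  -- derivative layer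
  have hdv : ∀ (q w : Pt), fderiv ℝ ξ₂ q w = 0 := by
    intro q w
    have hsq : (fun r => ξ₂ r * ξ₂ r) = fun _ => (1:ℝ) := by
      funext r; have h := F2 r; nlinarith [h]
    have h0 : fderiv ℝ (fun r => ξ₂ r * ξ₂ r) q w = 0 := by rw [hsq]; simp
    rw [fdmul q w (sm_diff h2).differentiableAt (sm_diff h2).differentiableAt] at h0
    have h2' : ξ₂ q * fderiv ℝ ξ₂ q w = 0 := by linarith
    exact (mul_eq_zero.mp h2').resolve_left (hv0 q)
  have keyA : ∀ p : Pt, ξ₁ p * fderiv ℝ (fun q => fderiv ℝ f q ((1:ℝ),(0:ℝ),(0:ℝ))) p ((1:ℝ),(0:ℝ),(0:ℝ))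
      + ξ₂ p * fderiv ℝ (fun q => fderiv ℝ f q ((1:ℝ),(0:ℝ),(0:ℝ))) p ((0:ℝ),(1:ℝ),(0:ℝ)) = 0 := by
    intro p
    show ξ₁ p * fxx f p + ξ₂ p * fxy f p = 0
    linear_combination ξ₁ p * F4 p + ξ₂ p * F5 p + (2*b p*ξ₁ p) * F2 p
  have keyB : ∀ p : Pt, ξ₁ p * fderiv ℝ (fun q => fderiv ℝ f q ((1:ℝ),(0:ℝ),(0:ℝ))) p ((0:ℝ),(1:ℝ),(0:ℝ))
      + ξ₂ p * fderiv ℝ (fun q => fderiv ℝ f q ((0:ℝ),(1:ℝ),(0:ℝ))) p ((0:ℝ),(1:ℝ),(0:ℝ)) = 0 := by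
    intro p
    show ξ₁ p * fxy f p + ξ₂ p * fyy f p = 0
    linear_combination ξ₁ p * F5 p + ξ₂ p * F6 p
  have cfx : ContDiff ℝ (⊤:ℕ∞) (fun q => fderiv ℝ f q ((1:ℝ),(0:ℝ),(0:ℝ))) := sm_fd hf _
  have cfy : ContDiff ℝ (⊤:ℕ∞) (fun q => fderiv ℝ f q ((0:ℝ),(1:ℝ),(0:ℝ))) := sm_fd hf _
  have hdb : Differentiable ℝ b := sm_diff hb
  have hd1 : Differentiable ℝ ξ₁ := sm_diff h1
  have hbv : Differentiable ℝ (fun q => b q * ξ₂ q) := sm_diff (hb.mul h2)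
  have hbvu : Differentiable ℝ (fun q => b q * ξ₂ q * ξ₁ q) := sm_diff ((hb.mul h2).mul h1)
  have hbuu : Differentiable ℝ (fun q => b q * (ξ₁ q * ξ₁ q)) := sm_diff (hb.mul (h1.mul h1))
  have huu' : Differentiable ℝ (fun q => ξ₁ q * ξ₁ q) := sm_diff (h1.mul h1)
  have EqA : ∀ p : Pt, -(2 * fderiv ℝ b p ((0:ℝ),(1:ℝ),(0:ℝ)))
      = 2*(fderiv ℝ b p ((1:ℝ),(0:ℝ),(0:ℝ)) * ξ₂ p * ξ₁ p)
        + 2*(b p * ξ₂ p * fderiv ℝ ξ₁ p ((1:ℝ),(0:ℝ),(0:ℝ))) := by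
    intro p
    have L : fderiv ℝ (fun q => fderiv ℝ (fun r => fderiv ℝ f r ((1:ℝ),(0:ℝ),(0:ℝ))) q ((1:ℝ),(0:ℝ),(0:ℝ))) p ((0:ℝ),(1:ℝ),(0:ℝ))
        = -(2 * fderiv ℝ b p ((0:ℝ),(1:ℝ),(0:ℝ))) := by
      rw [show (fun q => fderiv ℝ (fun r => fderiv ℝ f r ((1:ℝ),(0:ℝ),(0:ℝ))) q ((1:ℝ),(0:ℝ),(0:ℝ))) = fun q => (-2) * b q from
        funext fun q => by rw [show fderiv ℝ (fun r => fderiv ℝ f r ((1:ℝ),(0:ℝ),(0:ℝ))) q ((1:ℝ),(0:ℝ),(0:ℝ)) = fxx f q from rfl, F4 q]; ring]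
      rw [fdcmul (-2) p _ hdb.differentiableAt]; ring
    have R : fderiv ℝ (fun q => fderiv ℝ (fun r => fderiv ℝ f r ((1:ℝ),(0:ℝ),(0:ℝ))) q ((1:ℝ),(0:ℝ),(0:ℝ))) p ((0:ℝ),(1:ℝ),(0:ℝ))
        = 2*(fderiv ℝ b p ((1:ℝ),(0:ℝ),(0:ℝ)) * ξ₂ p * ξ₁ p)
          + 2*(b p * ξ₂ p * fderiv ℝ ξ₁ p ((1:ℝ),(0:ℝ),(0:ℝ))) := by
      rw [schwarz cfx p ((1:ℝ),(0:ℝ),(0:ℝ)) ((0:ℝ),(1:ℝ),(0:ℝ))]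
      rw [show (fun q => fderiv ℝ (fun r => fderiv ℝ f r ((1:ℝ),(0:ℝ),(0:ℝ))) q ((0:ℝ),(1:ℝ),(0:ℝ))) = fun q => 2 * (b q * ξ₂ q * ξ₁ q) from
        funext fun q => by rw [show fderiv ℝ (fun r => fderiv ℝ f r ((1:ℝ),(0:ℝ),(0:ℝ))) q ((0:ℝ),(1:ℝ),(0:ℝ)) = fxy f q from rfl, F5 q]]
      have d0 : fderiv ℝ (fun q => 2 * (b q * ξ₂ q * ξ₁ q)) p ((1:ℝ),(0:ℝ),(0:ℝ))
          = 2 * fderiv ℝ (fun q => b q * ξ₂ q * ξ₁ q) p ((1:ℝ),(0:ℝ),(0:ℝ)) :=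
        fdcmul 2 p _ hbvu.differentiableAt
      have d1 : fderiv ℝ (fun q => b q * ξ₂ q * ξ₁ q) p ((1:ℝ),(0:ℝ),(0:ℝ))
          = fderiv ℝ (fun q => b q * ξ₂ q) p ((1:ℝ),(0:ℝ),(0:ℝ)) * ξ₁ p
            + (b p * ξ₂ p) * fderiv ℝ ξ₁ p ((1:ℝ),(0:ℝ),(0:ℝ)) :=
        fdmul p _ hbv.differentiableAt hd1.differentiableAt
      have d2 : fderiv ℝ (fun q => b q * ξ₂ q) p ((1:ℝ),(0:ℝ),(0:ℝ))
          = fderiv ℝ b p ((1:ℝ),(0:ℝ),(0:ℝ)) * ξ₂ p + b p * fderiv ℝ ξ₂ p ((1:ℝ),(0:ℝ),(0:ℝ)) :=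
        fdmul p _ hdb.differentiableAt (sm_diff h2).differentiableAt
      rw [d0, d1, d2, hdv p ((1:ℝ),(0:ℝ),(0:ℝ))]; ring
    rw [← L, R]
  have EqB : ∀ p : Pt,
      -(2*(fderiv ℝ b p ((1:ℝ),(0:ℝ),(0:ℝ)) * (ξ₁ p * ξ₁ p))
        + 2*(b p * (fderiv ℝ ξ₁ p ((1:ℝ),(0:ℝ),(0:ℝ)) * ξ₁ p + ξ₁ p * fderiv ℝ ξ₁ p ((1:ℝ),(0:ℝ),(0:ℝ)))))
      = 2*(fderiv ℝ b p ((0:ℝ),(1:ℝ),(0:ℝ)) * ξ₂ p * ξ₁ p)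
        + 2*(b p * ξ₂ p * fderiv ℝ ξ₁ p ((0:ℝ),(1:ℝ),(0:ℝ))) := by
    intro p
    have L : fderiv ℝ (fun q => fderiv ℝ (fun r => fderiv ℝ f r ((0:ℝ),(1:ℝ),(0:ℝ))) q ((0:ℝ),(1:ℝ),(0:ℝ))) p ((1:ℝ),(0:ℝ),(0:ℝ))
        = -(2*(fderiv ℝ b p ((1:ℝ),(0:ℝ),(0:ℝ)) * (ξ₁ p * ξ₁ p))
            + 2*(b p * (fderiv ℝ ξ₁ p ((1:ℝ),(0:ℝ),(0:ℝ)) * ξ₁ p + ξ₁ p * fderiv ℝ ξ₁ p ((1:ℝ),(0:ℝ),(0:ℝ))))) := by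
      rw [show (fun q => fderiv ℝ (fun r => fderiv ℝ f r ((0:ℝ),(1:ℝ),(0:ℝ))) q ((0:ℝ),(1:ℝ),(0:ℝ))) = fun q => -(2 * (b q * (ξ₁ q * ξ₁ q))) from
        funext fun q => by rw [show fderiv ℝ (fun r => fderiv ℝ f r ((0:ℝ),(1:ℝ),(0:ℝ))) q ((0:ℝ),(1:ℝ),(0:ℝ)) = fyy f q from rfl, F6 q]]
      have dn : fderiv ℝ (fun q => -(2 * (b q * (ξ₁ q * ξ₁ q)))) p ((1:ℝ),(0:ℝ),(0:ℝ))
          = -fderiv ℝ (fun q => 2 * (b q * (ξ₁ q * ξ₁ q))) p ((1:ℝ),(0:ℝ),(0:ℝ)) := by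
        rw [fderiv_fun_neg]; simp
      have d0 : fderiv ℝ (fun q => 2 * (b q * (ξ₁ q * ξ₁ q))) p ((1:ℝ),(0:ℝ),(0:ℝ))
          = 2 * fderiv ℝ (fun q => b q * (ξ₁ q * ξ₁ q)) p ((1:ℝ),(0:ℝ),(0:ℝ)) :=
        fdcmul 2 p _ hbuu.differentiableAt
      have d1 : fderiv ℝ (fun q => b q * (ξ₁ q * ξ₁ q)) p ((1:ℝ),(0:ℝ),(0:ℝ))
          = fderiv ℝ b p ((1:ℝ),(0:ℝ),(0:ℝ)) * (ξ₁ p * ξ₁ p)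
            + b p * fderiv ℝ (fun q => ξ₁ q * ξ₁ q) p ((1:ℝ),(0:ℝ),(0:ℝ)) :=
        fdmul p _ hdb.differentiableAt huu'.differentiableAt
      have d2 : fderiv ℝ (fun q => ξ₁ q * ξ₁ q) p ((1:ℝ),(0:ℝ),(0:ℝ))
          = fderiv ℝ ξ₁ p ((1:ℝ),(0:ℝ),(0:ℝ)) * ξ₁ p + ξ₁ p * fderiv ℝ ξ₁ p ((1:ℝ),(0:ℝ),(0:ℝ)) :=
        fdmul p _ hd1.differentiableAt hd1.differentiableAt
      rw [dn, d0, d1, d2]; ring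
    have R : fderiv ℝ (fun q => fderiv ℝ (fun r => fderiv ℝ f r ((0:ℝ),(1:ℝ),(0:ℝ))) q ((0:ℝ),(1:ℝ),(0:ℝ))) p ((1:ℝ),(0:ℝ),(0:ℝ))
        = 2*(fderiv ℝ b p ((0:ℝ),(1:ℝ),(0:ℝ)) * ξ₂ p * ξ₁ p)
          + 2*(b p * ξ₂ p * fderiv ℝ ξ₁ p ((0:ℝ),(1:ℝ),(0:ℝ))) := by
      rw [schwarz cfy p ((0:ℝ),(1:ℝ),(0:ℝ)) ((1:ℝ),(0:ℝ),(0:ℝ))]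
      rw [show (fun q => fderiv ℝ (fun r => fderiv ℝ f r ((0:ℝ),(1:ℝ),(0:ℝ))) q ((1:ℝ),(0:ℝ),(0:ℝ))) = fun q => 2 * (b q * ξ₂ q * ξ₁ q) from
        funext fun q => by
          rw [show fderiv ℝ (fun r => fderiv ℝ f r ((0:ℝ),(1:ℝ),(0:ℝ))) q ((1:ℝ),(0:ℝ),(0:ℝ))
            = fderiv ℝ (fun r => fderiv ℝ f r ((1:ℝ),(0:ℝ),(0:ℝ))) q ((0:ℝ),(1:ℝ),(0:ℝ)) from schwarz hf q _ _,
            show fderiv ℝ (fun r => fderiv ℝ f r ((1:ℝ),(0:ℝ),(0:ℝ))) q ((0:ℝ),(1:ℝ),(0:ℝ)) = fxy f q from rfl, F5 q]]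
      have d0 : fderiv ℝ (fun q => 2 * (b q * ξ₂ q * ξ₁ q)) p ((0:ℝ),(1:ℝ),(0:ℝ))
          = 2 * fderiv ℝ (fun q => b q * ξ₂ q * ξ₁ q) p ((0:ℝ),(1:ℝ),(0:ℝ)) :=
        fdcmul 2 p _ hbvu.differentiableAt
      have d1 : fderiv ℝ (fun q => b q * ξ₂ q * ξ₁ q) p ((0:ℝ),(1:ℝ),(0:ℝ))
          = fderiv ℝ (fun q => b q * ξ₂ q) p ((0:ℝ),(1:ℝ),(0:ℝ)) * ξ₁ p
            + (b p * ξ₂ p) * fderiv ℝ ξ₁ p ((0:ℝ),(1:ℝ),(0:ℝ)) :=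
        fdmul p _ hbv.differentiableAt hd1.differentiableAt
      have d2 : fderiv ℝ (fun q => b q * ξ₂ q) p ((0:ℝ),(1:ℝ),(0:ℝ))
          = fderiv ℝ b p ((0:ℝ),(1:ℝ),(0:ℝ)) * ξ₂ p + b p * fderiv ℝ ξ₂ p ((0:ℝ),(1:ℝ),(0:ℝ)) :=
        fdmul p _ hdb.differentiableAt (sm_diff h2).differentiableAt
      rw [d0, d1, d2, hdv p ((0:ℝ),(1:ℝ),(0:ℝ))]; ring
    rw [← L, R]
  have huu : ∀ p : Pt, ξ₁ p * fderiv ℝ ξ₁ p ((1:ℝ),(0:ℝ),(0:ℝ))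
      + ξ₂ p * fderiv ℝ ξ₁ p ((0:ℝ),(1:ℝ),(0:ℝ)) = 0 := by
    intro p
    have key : (b p * ξ₂ p) * (ξ₁ p * fderiv ℝ ξ₁ p ((1:ℝ),(0:ℝ),(0:ℝ))
        + ξ₂ p * fderiv ℝ ξ₁ p ((0:ℝ),(1:ℝ),(0:ℝ))) = 0 := by
      linear_combination (ξ₁ p/2) * EqA p + (-(ξ₂ p)/2) * EqB p
        + (-(fderiv ℝ b p ((0:ℝ),(1:ℝ),(0:ℝ)) * ξ₁ p)) * F2 p
    rcases mul_eq_zero.mp key with h | h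
    · exact absurd h (mul_ne_zero (hb0 p) (hv0 p))
    · exact h
  have item1 : ∀ (i j : Fin 3) (p : Pt),
      Rop f (E i) (E j) (fun q => (ξ₁ q, ξ₂ q, (fun _ => (0:ℝ)) q)) p = 0 := by
    have h30 : ((0:ℝ),(0:ℝ),(0:ℝ)) = (0:Pt) := rfl
    have hS0 : cov f (E 0) (fun q => (ξ₁ q, ξ₂ q, (fun _ => (0:ℝ)) q))
        = fun q => (fderiv ℝ ξ₁ q ((1:ℝ),(0:ℝ),(0:ℝ)), (0:ℝ), (0:ℝ)) := by
      funext q; simp [cov, dd, E, c1, c2, c3, hdv]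
    have hS1 : cov f (E 1) (fun q => (ξ₁ q, ξ₂ q, (fun _ => (0:ℝ)) q))
        = fun q => (fderiv ℝ ξ₁ q ((0:ℝ),(1:ℝ),(0:ℝ)), (0:ℝ), (0:ℝ)) := by
      funext q; simp [cov, dd, E, c1, c2, c3, hdv]
    have hS2 : cov f (E 2) (fun q => (ξ₁ q, ξ₂ q, (fun _ => (0:ℝ)) q))
        = fun q => (fderiv ℝ ξ₁ q ((0:ℝ),(0:ℝ),(1:ℝ))
            + ((2:ℝ)⁻¹ * fderiv ℝ f q ((1:ℝ),(0:ℝ),(0:ℝ)) * ξ₁ q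
              + (2:ℝ)⁻¹ * fderiv ℝ f q ((0:ℝ),(1:ℝ),(0:ℝ)) * ξ₂ q), (0:ℝ), (0:ℝ)) := by
      funext q; simp [cov, dd, E, c1, c2, c3, hdv, pdx, pdy]; ring
    have hbrkE : ∀ i j : Fin 3, brk (E i) (E j) = fun _ => (0:Pt) := by
      intro i j; funext q; fin_cases i <;> fin_cases j <;> simp [brk, dd, E, c1, c2, c3, Prod.ext_iff]
    have hcovZ : cov f (fun _ => (0:Pt)) (fun q => (ξ₁ q, ξ₂ q, (fun _ => (0:ℝ)) q)) = fun _ => (0:Pt) := by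
      funext q; simp [cov, dd, c1, c2, c3, Prod.ext_iff]
    intro i j p
    have dfx : DifferentiableAt ℝ (fun q => fderiv ℝ f q ((1:ℝ),(0:ℝ),(0:ℝ))) p := (sm_diff cfx).differentiableAt
    have dfy : DifferentiableAt ℝ (fun q => fderiv ℝ f q ((0:ℝ),(1:ℝ),(0:ℝ))) p := (sm_diff cfy).differentiableAt
    have c2fx : ContDiff ℝ (⊤:ℕ∞) (fun q => (2:ℝ)⁻¹ * fderiv ℝ f q ((1:ℝ),(0:ℝ),(0:ℝ)) * ξ₁ q) :=
      (contDiff_const.mul cfx).mul h1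
    have c2fy : ContDiff ℝ (⊤:ℕ∞) (fun q => (2:ℝ)⁻¹ * fderiv ℝ f q ((0:ℝ),(1:ℝ),(0:ℝ)) * ξ₂ q) :=
      (contDiff_const.mul cfy).mul h2
    have dA2 : ∀ w : Pt, fderiv ℝ (fun q => fderiv ℝ ξ₁ q ((0:ℝ),(0:ℝ),(1:ℝ))
          + ((2:ℝ)⁻¹ * fderiv ℝ f q ((1:ℝ),(0:ℝ),(0:ℝ)) * ξ₁ q
            + (2:ℝ)⁻¹ * fderiv ℝ f q ((0:ℝ),(1:ℝ),(0:ℝ)) * ξ₂ q)) p w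
        = fderiv ℝ (fun q => fderiv ℝ ξ₁ q ((0:ℝ),(0:ℝ),(1:ℝ))) p w
          + ((2:ℝ)⁻¹ * fderiv ℝ (fun q => fderiv ℝ f q ((1:ℝ),(0:ℝ),(0:ℝ))) p w * ξ₁ p
            + (2:ℝ)⁻¹ * fderiv ℝ f p ((1:ℝ),(0:ℝ),(0:ℝ)) * fderiv ℝ ξ₁ p w
            + (2:ℝ)⁻¹ * fderiv ℝ (fun q => fderiv ℝ f q ((0:ℝ),(1:ℝ),(0:ℝ))) p w * ξ₂ p) := by
      intro w
      have s1 : fderiv ℝ (fun q => fderiv ℝ ξ₁ q ((0:ℝ),(0:ℝ),(1:ℝ))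
            + ((2:ℝ)⁻¹ * fderiv ℝ f q ((1:ℝ),(0:ℝ),(0:ℝ)) * ξ₁ q
              + (2:ℝ)⁻¹ * fderiv ℝ f q ((0:ℝ),(1:ℝ),(0:ℝ)) * ξ₂ q)) p w
          = fderiv ℝ (fun q => fderiv ℝ ξ₁ q ((0:ℝ),(0:ℝ),(1:ℝ))) p w
            + fderiv ℝ (fun q => (2:ℝ)⁻¹ * fderiv ℝ f q ((1:ℝ),(0:ℝ),(0:ℝ)) * ξ₁ q
              + (2:ℝ)⁻¹ * fderiv ℝ f q ((0:ℝ),(1:ℝ),(0:ℝ)) * ξ₂ q) p w :=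
        fdadd p w (sm_diff (sm_fd h1 _)).differentiableAt (sm_diff (c2fx.add c2fy)).differentiableAt
      have s2 : fderiv ℝ (fun q => (2:ℝ)⁻¹ * fderiv ℝ f q ((1:ℝ),(0:ℝ),(0:ℝ)) * ξ₁ q
            + (2:ℝ)⁻¹ * fderiv ℝ f q ((0:ℝ),(1:ℝ),(0:ℝ)) * ξ₂ q) p w
          = fderiv ℝ (fun q => (2:ℝ)⁻¹ * fderiv ℝ f q ((1:ℝ),(0:ℝ),(0:ℝ)) * ξ₁ q) p w
            + fderiv ℝ (fun q => (2:ℝ)⁻¹ * fderiv ℝ f q ((0:ℝ),(1:ℝ),(0:ℝ)) * ξ₂ q) p w :=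
        fdadd p w (sm_diff c2fx).differentiableAt (sm_diff c2fy).differentiableAt
      have s3 : fderiv ℝ (fun q => (2:ℝ)⁻¹ * fderiv ℝ f q ((1:ℝ),(0:ℝ),(0:ℝ)) * ξ₁ q) p w
          = fderiv ℝ (fun q => (2:ℝ)⁻¹ * fderiv ℝ f q ((1:ℝ),(0:ℝ),(0:ℝ))) p w * ξ₁ p
            + ((2:ℝ)⁻¹ * fderiv ℝ f p ((1:ℝ),(0:ℝ),(0:ℝ))) * fderiv ℝ ξ₁ p w :=
        fdmul p w (sm_diff (contDiff_const.mul cfx)).differentiableAt hd1.differentiableAt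
      have s4 : fderiv ℝ (fun q => (2:ℝ)⁻¹ * fderiv ℝ f q ((1:ℝ),(0:ℝ),(0:ℝ))) p w
          = (2:ℝ)⁻¹ * fderiv ℝ (fun q => fderiv ℝ f q ((1:ℝ),(0:ℝ),(0:ℝ))) p w := fdcmul ((2:ℝ)⁻¹) p w dfx
      have s5 : fderiv ℝ (fun q => (2:ℝ)⁻¹ * fderiv ℝ f q ((0:ℝ),(1:ℝ),(0:ℝ)) * ξ₂ q) p w
          = fderiv ℝ (fun q => (2:ℝ)⁻¹ * fderiv ℝ f q ((0:ℝ),(1:ℝ),(0:ℝ))) p w * ξ₂ p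
            + ((2:ℝ)⁻¹ * fderiv ℝ f p ((0:ℝ),(1:ℝ),(0:ℝ))) * fderiv ℝ ξ₂ p w :=
        fdmul p w (sm_diff (contDiff_const.mul cfy)).differentiableAt (sm_diff h2).differentiableAt
      have s6 : fderiv ℝ (fun q => (2:ℝ)⁻¹ * fderiv ℝ f q ((0:ℝ),(1:ℝ),(0:ℝ))) p w
          = (2:ℝ)⁻¹ * fderiv ℝ (fun q => fderiv ℝ f q ((0:ℝ),(1:ℝ),(0:ℝ))) p w := fdcmul ((2:ℝ)⁻¹) p w dfy
      rw [s1, s2, s3, s4, s5, s6, hdv p w]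
      ring
    have caseD : ∀ k : Fin 3, Rop f (E k) (E k) (fun q => (ξ₁ q, ξ₂ q, (fun _ => (0:ℝ)) q)) p = 0 := by
      intro k
      simp only [Rop, hbrkE, hcovZ]
      simp
    have c01 : Rop f (E 0) (E 1) (fun q => (ξ₁ q, ξ₂ q, (fun _ => (0:ℝ)) q)) p = 0 := by
      simp only [Rop, hbrkE, hcovZ, hS0, hS1]
      simp [cov, dd, E, c1, c2, c3, hdv, pdx, pdy, pdz, Prod.ext_iff, -Prod.mk_zero_zero]
      linear_combination schwarz h1 p ((1:ℝ),(0:ℝ),(0:ℝ)) ((0:ℝ),(1:ℝ),(0:ℝ))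
    have c10 : Rop f (E 1) (E 0) (fun q => (ξ₁ q, ξ₂ q, (fun _ => (0:ℝ)) q)) p = 0 := by
      simp only [Rop, hbrkE, hcovZ, hS0, hS1]
      simp [cov, dd, E, c1, c2, c3, hdv, pdx, pdy, pdz, Prod.ext_iff, -Prod.mk_zero_zero]
      linear_combination schwarz h1 p ((0:ℝ),(1:ℝ),(0:ℝ)) ((1:ℝ),(0:ℝ),(0:ℝ))
    have c02 : Rop f (E 0) (E 2) (fun q => (ξ₁ q, ξ₂ q, (fun _ => (0:ℝ)) q)) p = 0 := by
      simp only [Rop, hbrkE, hcovZ, hS0, hS2]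
      simp [cov, dd, E, c1, c2, c3, hdv, pdx, pdy, pdz, Prod.ext_iff, -Prod.mk_zero_zero]
      linear_combination (-(1:ℝ)) * dA2 ((1:ℝ),(0:ℝ),(0:ℝ))
        - schwarz h1 p ((0:ℝ),(0:ℝ),(1:ℝ)) ((1:ℝ),(0:ℝ),(0:ℝ))
        - (2:ℝ)⁻¹ * ξ₂ p * schwarz hf p ((0:ℝ),(1:ℝ),(0:ℝ)) ((1:ℝ),(0:ℝ),(0:ℝ))
        - (2:ℝ)⁻¹ * keyA p
    have c20 : Rop f (E 2) (E 0) (fun q => (ξ₁ q, ξ₂ q, (fun _ => (0:ℝ)) q)) p = 0 := by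
      simp only [Rop, hbrkE, hcovZ, hS0, hS2]
      simp [cov, dd, E, c1, c2, c3, hdv, pdx, pdy, pdz, Prod.ext_iff, -Prod.mk_zero_zero]
      linear_combination dA2 ((1:ℝ),(0:ℝ),(0:ℝ))
        + schwarz h1 p ((0:ℝ),(0:ℝ),(1:ℝ)) ((1:ℝ),(0:ℝ),(0:ℝ))
        + (2:ℝ)⁻¹ * ξ₂ p * schwarz hf p ((0:ℝ),(1:ℝ),(0:ℝ)) ((1:ℝ),(0:ℝ),(0:ℝ))
        + (2:ℝ)⁻¹ * keyA p
    have c12 : Rop f (E 1) (E 2) (fun q => (ξ₁ q, ξ₂ q, (fun _ => (0:ℝ)) q)) p = 0 := by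
      simp only [Rop, hbrkE, hcovZ, hS1, hS2]
      simp [cov, dd, E, c1, c2, c3, hdv, pdx, pdy, pdz, Prod.ext_iff, -Prod.mk_zero_zero]
      linear_combination (-(1:ℝ)) * dA2 ((0:ℝ),(1:ℝ),(0:ℝ))
        - schwarz h1 p ((0:ℝ),(0:ℝ),(1:ℝ)) ((0:ℝ),(1:ℝ),(0:ℝ))
        - (2:ℝ)⁻¹ * keyB p
    have c21 : Rop f (E 2) (E 1) (fun q => (ξ₁ q, ξ₂ q, (fun _ => (0:ℝ)) q)) p = 0 := by
      simp only [Rop, hbrkE, hcovZ, hS1, hS2]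
      simp [cov, dd, E, c1, c2, c3, hdv, pdx, pdy, pdz, Prod.ext_iff, -Prod.mk_zero_zero]
      linear_combination dA2 ((0:ℝ),(1:ℝ),(0:ℝ))
        + schwarz h1 p ((0:ℝ),(0:ℝ),(1:ℝ)) ((0:ℝ),(1:ℝ),(0:ℝ))
        + (2:ℝ)⁻¹ * keyB p
    fin_cases i <;> fin_cases j
    · exact caseD 0
    · exact c01
    · exact c02
    · exact c10
    · exact caseD 1
    · exact c12
    · exact c20
    · exact c21
    · exact caseD 2

  have item2 : ∀ X : VF, ContDiff ℝ (⊤ : ℕ∞) X → ∀ p : Pt,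
      gm f (Rop f X (fun q => (ξ₁ q, ξ₂ q, (fun _ => (0:ℝ)) q))
        (fun q => (ξ₁ q, ξ₂ q, (fun _ => (0:ℝ)) q))) X p = 0 := by
    intro X hX p
    have hT1 : ∀ q : Pt, fderiv ℝ ξ₁ q ((ξ₁ q, ξ₂ q, (0:ℝ)) : Pt) = 0 := by
      intro q
      rw [fd_expand]
      simpa using huu q
    have hcovss : cov f (fun q => ((ξ₁ q, ξ₂ q, (0:ℝ)) : Pt))
        (fun q => ((ξ₁ q, ξ₂ q, (0:ℝ)) : Pt)) = fun _ => (0:Pt) := by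
      funext q
      simp [cov, dd, c1, c2, c3, hdv, Prod.ext_iff, hT1 q]
    have hcovX0 : cov f X (fun _ => (0:Pt)) = fun _ => (0:Pt) := by
      funext q; simp [cov, dd, c1, c2, c3, Prod.ext_iff]
    simp only [gm, Rop, hcovss, hcovX0]
    simp [cov, dd, brk, c1, c2, c3, hdv, pdx, pdy, pdz, -Prod.mk_zero_zero, hT1]
    have hXd : DifferentiableAt ℝ X p := (sm_diff hX).differentiableAt
    have hX1c : ContDiff ℝ (⊤:ℕ∞) (fun q => (X q).1) := contDiff_fst.comp hX
    have hX2c : ContDiff ℝ (⊤:ℕ∞) (fun q => (X q).2.1) := contDiff_fst.comp (contDiff_snd.comp hX)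
    have hX3c : ContDiff ℝ (⊤:ℕ∞) (fun q => (X q).2.2) := contDiff_snd.comp (contDiff_snd.comp hX)
    have dFx : fderiv ℝ (fun q => fderiv ℝ f q ((1:ℝ),(0:ℝ),(0:ℝ))) p ((ξ₁ p, ξ₂ p, (0:ℝ)):Pt) = 0 := by
      rw [fd_expand]
      simpa using keyA p
    have dFy : fderiv ℝ (fun q => fderiv ℝ f q ((0:ℝ),(1:ℝ),(0:ℝ))) p ((ξ₁ p, ξ₂ p, (0:ℝ)):Pt) = 0 := by
      rw [fd_expand]
      simp
      linear_combination keyB p + ξ₁ p * schwarz hf p ((0:ℝ),(1:ℝ),(0:ℝ)) ((1:ℝ),(0:ℝ),(0:ℝ))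
    have e1t : fderiv ℝ ξ₁ p
        (((fderiv ℝ (fun q => ξ₁ q) p) (X p) - (fderiv ℝ (fun q => (X q).1) p) (ξ₁ p, ξ₂ p, 0),
          -(fderiv ℝ (fun q => (X q).2.1) p) (ξ₁ p, ξ₂ p, 0),
          -(fderiv ℝ (fun q => (X q).2.2) p) (ξ₁ p, ξ₂ p, 0)) : Pt)
        = ((fderiv ℝ (fun q => ξ₁ q) p) (X p) - (fderiv ℝ (fun q => (X q).1) p) (ξ₁ p, ξ₂ p, 0))
            * fderiv ℝ ξ₁ p ((1:ℝ),(0:ℝ),(0:ℝ))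
          + (-(fderiv ℝ (fun q => (X q).2.1) p) (ξ₁ p, ξ₂ p, 0)) * fderiv ℝ ξ₁ p ((0:ℝ),(1:ℝ),(0:ℝ))
          + (-(fderiv ℝ (fun q => (X q).2.2) p) (ξ₁ p, ξ₂ p, 0)) * fderiv ℝ ξ₁ p ((0:ℝ),(0:ℝ),(1:ℝ)) := by
      rw [fd_expand]
    have hfdXp : fderiv ℝ X p ((ξ₁ p, ξ₂ p, (0:ℝ)):Pt)
        = (((fderiv ℝ (fun q => (X q).1) p) ((ξ₁ p, ξ₂ p, (0:ℝ)):Pt),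
            (fderiv ℝ (fun q => (X q).2.1) p) ((ξ₁ p, ξ₂ p, (0:ℝ)):Pt),
            (fderiv ℝ (fun q => (X q).2.2) p) ((ξ₁ p, ξ₂ p, (0:ℝ)):Pt)) : Pt) :=
      fdprod3 p _ (sm_diff hX1c).differentiableAt (sm_diff hX2c).differentiableAt
        (sm_diff hX3c).differentiableAt
    have e3t : fderiv ℝ ξ₁ p (fderiv ℝ X p ((ξ₁ p, ξ₂ p, (0:ℝ)):Pt))
        = (fderiv ℝ (fun q => (X q).1) p) ((ξ₁ p, ξ₂ p, (0:ℝ)):Pt) * fderiv ℝ ξ₁ p ((1:ℝ),(0:ℝ),(0:ℝ))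
          + (fderiv ℝ (fun q => (X q).2.1) p) ((ξ₁ p, ξ₂ p, (0:ℝ)):Pt) * fderiv ℝ ξ₁ p ((0:ℝ),(1:ℝ),(0:ℝ))
          + (fderiv ℝ (fun q => (X q).2.2) p) ((ξ₁ p, ξ₂ p, (0:ℝ)):Pt) * fderiv ℝ ξ₁ p ((0:ℝ),(0:ℝ),(1:ℝ)) := by
      rw [hfdXp, fd_expand]
    have e4t : fderiv ℝ (fderiv ℝ ξ₁) p ((ξ₁ p, ξ₂ p, (0:ℝ)):Pt) (X p)
        = fderiv ℝ (fderiv ℝ ξ₁) p (X p) ((ξ₁ p, ξ₂ p, (0:ℝ)):Pt) :=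
      hess_symm h1 p _ _
    have hzero : fderiv ℝ (fun q => fderiv ℝ ξ₁ q ((ξ₁ q, ξ₂ q, (0:ℝ)):Pt)) p (X p) = 0 := by
      rw [show (fun q => fderiv ℝ ξ₁ q ((ξ₁ q, ξ₂ q, (0:ℝ)):Pt)) = fun _ => (0:ℝ) from funext hT1]
      simp
    have p2 : fderiv ℝ (fun q => fderiv ℝ ξ₁ q ((ξ₁ q, ξ₂ q, (0:ℝ)):Pt)) p (X p)
        = fderiv ℝ (fderiv ℝ ξ₁) p (X p) ((ξ₁ p, ξ₂ p, (0:ℝ)):Pt)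
          + fderiv ℝ ξ₁ p (fderiv ℝ (fun q => ((ξ₁ q, ξ₂ q, (0:ℝ)):Pt)) p (X p)) :=
      fd_dd h1 p (X p) (sm_diff (h1.prodMk (h2.prodMk contDiff_const))).differentiableAt
    have p3 : fderiv ℝ (fun q => ((ξ₁ q, ξ₂ q, (0:ℝ)):Pt)) p (X p)
        = ((fderiv ℝ ξ₁ p (X p), (0:ℝ), (0:ℝ)) : Pt) := by
      rw [fdprod3 p (X p) hd1.differentiableAt (sm_diff h2).differentiableAt
        (differentiableAt_const 0)]
      simp [hdv]
    have p4 : fderiv ℝ ξ₁ p ((fderiv ℝ ξ₁ p (X p), (0:ℝ), (0:ℝ)) : Pt)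
        = fderiv ℝ ξ₁ p (X p) * fderiv ℝ ξ₁ p ((1:ℝ),(0:ℝ),(0:ℝ)) := by
      rw [fd_expand]; simp
    rw [p2, p3, p4] at hzero
    -- e2t : derivative of the S1 lambda
    have hAc : ContDiff ℝ (⊤:ℕ∞) (fun q => (fderiv ℝ (fun q' => ξ₁ q') q) (X q)) :=
      (h1.fderiv_right (by norm_cast)).clm_apply hX
    have hBc : ContDiff ℝ (⊤:ℕ∞) (fun q => 2⁻¹ * (fderiv ℝ f q) ((1:ℝ),(0:ℝ),(0:ℝ)) * ((X q).2.2 * ξ₁ q)) :=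
      (contDiff_const.mul cfx).mul (hX3c.mul h1)
    have hCc : ContDiff ℝ (⊤:ℕ∞) (fun q => 2⁻¹ * (fderiv ℝ f q) ((0:ℝ),(1:ℝ),(0:ℝ)) * ((X q).2.2 * ξ₂ q)) :=
      (contDiff_const.mul cfy).mul (hX3c.mul h2)
    have q1 : fderiv ℝ (fun q => (fderiv ℝ (fun q' => ξ₁ q') q) (X q)
          + 2⁻¹ * (fderiv ℝ f q) ((1:ℝ),(0:ℝ),(0:ℝ)) * ((X q).2.2 * ξ₁ q)
          + 2⁻¹ * (fderiv ℝ f q) ((0:ℝ),(1:ℝ),(0:ℝ)) * ((X q).2.2 * ξ₂ q)) p ((ξ₁ p, ξ₂ p, (0:ℝ)):Pt)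
        = fderiv ℝ (fun q => (fderiv ℝ (fun q' => ξ₁ q') q) (X q)
            + 2⁻¹ * (fderiv ℝ f q) ((1:ℝ),(0:ℝ),(0:ℝ)) * ((X q).2.2 * ξ₁ q)) p ((ξ₁ p, ξ₂ p, (0:ℝ)):Pt)
          + fderiv ℝ (fun q => 2⁻¹ * (fderiv ℝ f q) ((0:ℝ),(1:ℝ),(0:ℝ)) * ((X q).2.2 * ξ₂ q)) p ((ξ₁ p, ξ₂ p, (0:ℝ)):Pt) :=
      fdadd p _ (sm_diff (hAc.add hBc)).differentiableAt (sm_diff hCc).differentiableAt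
    have q2 : fderiv ℝ (fun q => (fderiv ℝ (fun q' => ξ₁ q') q) (X q)
          + 2⁻¹ * (fderiv ℝ f q) ((1:ℝ),(0:ℝ),(0:ℝ)) * ((X q).2.2 * ξ₁ q)) p ((ξ₁ p, ξ₂ p, (0:ℝ)):Pt)
        = fderiv ℝ (fun q => (fderiv ℝ (fun q' => ξ₁ q') q) (X q)) p ((ξ₁ p, ξ₂ p, (0:ℝ)):Pt)
          + fderiv ℝ (fun q => 2⁻¹ * (fderiv ℝ f q) ((1:ℝ),(0:ℝ),(0:ℝ)) * ((X q).2.2 * ξ₁ q)) p ((ξ₁ p, ξ₂ p, (0:ℝ)):Pt) :=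
      fdadd p _ (sm_diff hAc).differentiableAt (sm_diff hBc).differentiableAt
    have p1 : fderiv ℝ (fun q => (fderiv ℝ (fun q' => ξ₁ q') q) (X q)) p ((ξ₁ p, ξ₂ p, (0:ℝ)):Pt)
        = fderiv ℝ (fderiv ℝ ξ₁) p ((ξ₁ p, ξ₂ p, (0:ℝ)):Pt) (X p)
          + fderiv ℝ ξ₁ p (fderiv ℝ X p ((ξ₁ p, ξ₂ p, (0:ℝ)):Pt)) :=
      fd_dd h1 p _ hXd
    have pB : fderiv ℝ (fun q => 2⁻¹ * (fderiv ℝ f q) ((1:ℝ),(0:ℝ),(0:ℝ)) * ((X q).2.2 * ξ₁ q)) p ((ξ₁ p, ξ₂ p, (0:ℝ)):Pt)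
        = fderiv ℝ (fun q => 2⁻¹ * (fderiv ℝ f q) ((1:ℝ),(0:ℝ),(0:ℝ))) p ((ξ₁ p, ξ₂ p, (0:ℝ)):Pt) * ((X p).2.2 * ξ₁ p)
          + (2⁻¹ * (fderiv ℝ f p) ((1:ℝ),(0:ℝ),(0:ℝ))) * fderiv ℝ (fun q => (X q).2.2 * ξ₁ q) p ((ξ₁ p, ξ₂ p, (0:ℝ)):Pt) :=
      fdmul p _ (sm_diff (contDiff_const.mul cfx)).differentiableAt (sm_diff (hX3c.mul h1)).differentiableAt
    have pB1 : fderiv ℝ (fun q => 2⁻¹ * (fderiv ℝ f q) ((1:ℝ),(0:ℝ),(0:ℝ))) p ((ξ₁ p, ξ₂ p, (0:ℝ)):Pt)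
        = 2⁻¹ * fderiv ℝ (fun q => (fderiv ℝ f q) ((1:ℝ),(0:ℝ),(0:ℝ))) p ((ξ₁ p, ξ₂ p, (0:ℝ)):Pt) :=
      fdcmul _ p _ (sm_diff cfx).differentiableAt
    have pB2 : fderiv ℝ (fun q => (X q).2.2 * ξ₁ q) p ((ξ₁ p, ξ₂ p, (0:ℝ)):Pt)
        = fderiv ℝ (fun q => (X q).2.2) p ((ξ₁ p, ξ₂ p, (0:ℝ)):Pt) * ξ₁ p
          + (X p).2.2 * fderiv ℝ ξ₁ p ((ξ₁ p, ξ₂ p, (0:ℝ)):Pt) :=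
      fdmul p _ (sm_diff hX3c).differentiableAt hd1.differentiableAt
    have pC : fderiv ℝ (fun q => 2⁻¹ * (fderiv ℝ f q) ((0:ℝ),(1:ℝ),(0:ℝ)) * ((X q).2.2 * ξ₂ q)) p ((ξ₁ p, ξ₂ p, (0:ℝ)):Pt)
        = fderiv ℝ (fun q => 2⁻¹ * (fderiv ℝ f q) ((0:ℝ),(1:ℝ),(0:ℝ))) p ((ξ₁ p, ξ₂ p, (0:ℝ)):Pt) * ((X p).2.2 * ξ₂ p)
          + (2⁻¹ * (fderiv ℝ f p) ((0:ℝ),(1:ℝ),(0:ℝ))) * fderiv ℝ (fun q => (X q).2.2 * ξ₂ q) p ((ξ₁ p, ξ₂ p, (0:ℝ)):Pt) :=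
      fdmul p _ (sm_diff (contDiff_const.mul cfy)).differentiableAt (sm_diff (hX3c.mul h2)).differentiableAt
    have pC1 : fderiv ℝ (fun q => 2⁻¹ * (fderiv ℝ f q) ((0:ℝ),(1:ℝ),(0:ℝ))) p ((ξ₁ p, ξ₂ p, (0:ℝ)):Pt)
        = 2⁻¹ * fderiv ℝ (fun q => (fderiv ℝ f q) ((0:ℝ),(1:ℝ),(0:ℝ))) p ((ξ₁ p, ξ₂ p, (0:ℝ)):Pt) :=
      fdcmul _ p _ (sm_diff cfy).differentiableAt
    have pC2 : fderiv ℝ (fun q => (X q).2.2 * ξ₂ q) p ((ξ₁ p, ξ₂ p, (0:ℝ)):Pt)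
        = fderiv ℝ (fun q => (X q).2.2) p ((ξ₁ p, ξ₂ p, (0:ℝ)):Pt) * ξ₂ p
          + (X p).2.2 * fderiv ℝ ξ₂ p ((ξ₁ p, ξ₂ p, (0:ℝ)):Pt) :=
      fdmul p _ (sm_diff hX3c).differentiableAt (sm_diff h2).differentiableAt
    have e2t := q1
    rw [q2, p1, pB, pB1, dFx, pB2, hT1 p, pC, pC1, dFy, pC2, hdv p] at e2t
    left
    linear_combination e1t + e2t + e3t + e4t + hzero


  refine ⟨item1, item2, fun p => rfl, F7, ?_, ?_, ?_, ?_, item9, ?_, ?_⟩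
  · intro p; simp [etaV, E, c1, c2, c3]
  · intro p
    have hq : fxy f p / fxx f p = -(ξ₂ p * ξ₁ p) := by
      rw [F5 p, F4 p]; field_simp [hb0 p]
    simp only [etaV, V2, c1, c2, c3, hq]
    linear_combination (-(ξ₁ p)) * F2 p
  · intro p; simp [gm, E, c1, c2, c3]
  · intro p; simp [gm, E, V2, c1, c2, c3]
  · intro p
    rw [item9 p]
    have h00 : gm f (E 0) (E 0) p = 0 := by simp [gm, E, c1, c2, c3]
    have h01 : gm f (E 0) (V2 f) p = 1 := by simp [gm, E, V2, c1, c2, c3]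
    rw [h00, h01]
    ring
  · intro p
    have := F7 p
    simp [this]
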